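/- Let n ≥ 1 be an integer, let (n+1)/(2n) ≤ p ≤ 1, set δ = p/(p+1), c₀ = p·(n − 1/(2p−1)), F(H) = H^p for H > 0, and ζ(s) = c₀·s^{2−1/p} for s > 0. Then for every H > 0: ζ(F(H))²/(δ·F(H)) − 2n·(F''(H)·F(H)/F'(H))·ζ(F(H)) + n·(ζ'(F(H))·F(H) − ζ(F(H)))·F'(H) ≥ 0, where F', F'' are derivatives with respect to H and ζ' is the derivative of ζ with respect to its argument. -/

import Mathlib

theorem stmt_11 (n : ℕ) (hn : 1 ≤ n) (p : ℝ) (hp : (n + 1) / (2 * n) ≤ p) (hp1 : p ≤ 1)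
    (δ : ℝ) (hδ : δ = p / (p + 1))
    (c₀ : ℝ) (hc₀ : c₀ = p * (n - 1 / (2 * p - 1)))
    (F ζ : ℝ → ℝ) (hF : F = fun H : ℝ => H ^ p)
    (hζ : ζ = fun s : ℝ => c₀ * s ^ (2 - 1 / p))
    (H : ℝ) (hH : 0 < H) :
    0 ≤ (ζ (F H)) ^ 2 / (δ * F H)
        - 2 * n * (deriv (deriv F) H * F H / deriv F H) * ζ (F H)
        + n * (deriv ζ (F H) * F H - ζ (F H)) * deriv F H := by
  have hn1 : (1:ℝ) ≤ (n:ℝ) := by exact_mod_cast hn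
  have hn0 : (0:ℝ) < 2 * (n:ℝ) := by linarith
  have hnp : (n:ℝ) + 1 ≤ p * (2 * n) := (div_le_iff₀ hn0).mp hp
  have h2p : 1/2 < p := by nlinarith
  have hp0 : (0:ℝ) < p := by linarith
  have h2p1 : (0:ℝ) < 2 * p - 1 := by linarith
  have hδ0 : 0 < δ := by rw [hδ]; positivity
  have hc0 : 0 ≤ c₀ := by
    rw [hc₀]
    apply mul_nonneg hp0.le
    have : 1 / (2 * p - 1) ≤ (n:ℝ) := by
      rw [div_le_iff₀ h2p1]; nlinarith
    linarith
  -- derivatives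
  have hdF : deriv F H = p * H ^ (p - 1) := by
    rw [hF, Real.deriv_rpow_const]
  have hFH : F H = H ^ p := by rw [hF]
  have hFHpos : 0 < F H := by rw [hFH]; positivity
  have hdF2 : deriv (deriv F) H = p * ((p - 1) * H ^ (p - 2)) := by
    have hev : deriv F =ᶠ[nhds H] fun x => p * x ^ (p - 1) := by
      filter_upwards [eventually_ne_nhds hH.ne'] with x hx
      rw [hF, Real.deriv_rpow_const]
    rw [hev.deriv_eq, deriv_const_mul p (Real.differentiableAt_rpow_const_of_ne _ hH.ne'),
      Real.deriv_rpow_const]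
    ring
  have hdζ : deriv ζ (F H) = c₀ * ((2 - 1/p) * (F H) ^ (2 - 1/p - 1)) := by
    rw [hζ]
    rw [deriv_const_mul c₀ (Real.differentiableAt_rpow_const_of_ne _ hFHpos.ne'),
      Real.deriv_rpow_const]
  have hζF : ζ (F H) = c₀ * (F H) ^ (2 - 1/p) := by rw [hζ]
  -- rpow simplifications
  have hpow1 : (F H) ^ (2 - 1/p) = H ^ (2 * p - 1) := by
    rw [hFH, ← Real.rpow_mul hH.le]
    congr 1
    field_simp
  have hpow2 : (F H) ^ (2 - 1/p - 1) = H ^ (p - 1) := by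
    rw [hFH, ← Real.rpow_mul hH.le]
    congr 1
    field_simp
    ring
  -- express powers via u = H^(p-2)
  set u := H ^ (p - 2) with hu
  have hupos : 0 < u := Real.rpow_pos_of_pos hH _
  have e1 : H ^ p = u * H ^ 2 := by
    rw [show p = (p - 2) + 2 by ring, Real.rpow_add hH, Real.rpow_two, hu]
  have e2 : H ^ (p - 1) = u * H := by
    rw [hu, show p - 1 = (p - 2) + 1 by ring, Real.rpow_add hH, Real.rpow_one]
  have e3 : H ^ (2 * p - 1) = u ^ 2 * H ^ 3 := by
    rw [show 2 * p - 1 = (p - 2) + ((p - 2) + 3) by ring, Real.rpow_add hH,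
      Real.rpow_add hH,
      show H ^ (3:ℝ) = H ^ 3 from by
        rw [show (3:ℝ) = ((3:ℕ):ℝ) by norm_num, Real.rpow_natCast], hu]
    ring
  rw [hdF, hdF2, hdζ, hζF, hpow1, hpow2, hFH, e1, e2, e3]
  have key : (c₀ * (u ^ 2 * H ^ 3)) ^ 2 / (δ * (u * H ^ 2))
        - 2 * n * (p * ((p - 1) * u) * (u * H ^ 2) / (p * (u * H))) * (c₀ * (u ^ 2 * H ^ 3))
        + n * (c₀ * ((2 - 1/p) * (u * H)) * (u * H ^ 2) - c₀ * (u ^ 2 * H ^ 3)) * (p * (u * H))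
      = u ^ 3 * H ^ 4 * (c₀ ^ 2 / δ + n * (1 - p) * c₀) := by
    field_simp
    ring
  rw [key]
  have h1 : 0 ≤ c₀ ^ 2 / δ := by positivity
  have h2 : 0 ≤ (n:ℝ) * (1 - p) * c₀ := by
    apply mul_nonneg (mul_nonneg (by positivity) (by linarith)) hc0
  positivity
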